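/- Let S ⊆ ℝ² be a measurable T(3,2)-set whose diameter is at least 4. Then λ₂(S) ≤ 2π. -/

import Mathlib

open MeasureTheory Metric Real

def IsT32Set (S : Set (EuclideanSpace ℝ (Fin 2))) : Prop :=
  ∀ p ∈ S, ∀ q ∈ S, ∀ r ∈ S, dist p q ≤ 2 ∨ dist q r ≤ 2 ∨ dist p r ≤ 2

open Set
open scoped ENNReal NNReal

-- lintegral polar change of variables, ℝ×ℝ version
theorem lintegral_comp_polarCoord_symm' (g : ℝ × ℝ → ℝ≥0∞) :
    ∫⁻ p in polarCoord.target, ENNReal.ofReal p.1 * g (polarCoord.symm p) = ∫⁻ p, g p := by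
  set B : ℝ × ℝ → ℝ × ℝ →L[ℝ] ℝ × ℝ := fun p =>
    LinearMap.toContinuousLinearMap (Matrix.toLin (Module.Basis.finTwoProd ℝ) (Module.Basis.finTwoProd ℝ)
      !![Real.cos p.2, -p.1 * Real.sin p.2; Real.sin p.2, p.1 * Real.cos p.2])
  have A : ∀ p ∈ polarCoord.target, HasFDerivWithinAt polarCoord.symm (B p) polarCoord.target p :=
    fun p _ => (hasFDerivAt_polarCoord_symm p).hasFDerivWithinAt
  have B_det : ∀ p, (B p).det = p.1 := by
    intro p
    conv_rhs => rw [← one_mul p.1, ← cos_sq_add_sin_sq p.2]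
    simp only [B, neg_mul, LinearMap.det_toContinuousLinearMap, LinearMap.det_toLin,
      Matrix.det_fin_two_of, sub_neg_eq_add]
    ring
  symm
  calc
    ∫⁻ p, g p = ∫⁻ p in polarCoord.source, g p := by
      rw [← setLIntegral_univ]
      exact (setLIntegral_congr polarCoord_source_ae_eq_univ).symm
    _ = ∫⁻ p in polarCoord.symm '' polarCoord.target, g p := by
      rw [polarCoord.symm_image_target_eq_source]
    _ = ∫⁻ p in polarCoord.target, ENNReal.ofReal |(B p).det| * g (polarCoord.symm p) := by
      exact lintegral_image_eq_lintegral_abs_det_fderiv_mul volume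
        polarCoord.open_target.measurableSet A polarCoord.symm.injOn g
    _ = ∫⁻ p in polarCoord.target, ENNReal.ofReal p.1 * g (polarCoord.symm p) := by
      apply setLIntegral_congr_fun polarCoord.open_target.measurableSet
      intro p hp
      dsimp only
      rw [B_det, abs_of_pos hp.1]

theorem lintegral_comp_complex_polarCoord_symm (g : ℂ → ℝ≥0∞) :
    ∫⁻ p in polarCoord.target, ENNReal.ofReal p.1 * g (Complex.polarCoord.symm p) = ∫⁻ z, g z := by
  have h1 : ∫⁻ q : ℝ × ℝ, g (Complex.measurableEquivRealProd.symm q) = ∫⁻ z, g z :=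
    (Complex.volume_preserving_equiv_real_prod.symm).lintegral_comp_emb
      (MeasurableEquiv.measurableEmbedding _) g
  have hfun : ∀ p : ℝ × ℝ,
      Complex.polarCoord.symm p = Complex.measurableEquivRealProd.symm (polarCoord.symm p) := by
    intro p
    apply Complex.ext <;>
      simp [Complex.polarCoord_symm_apply, Complex.measurableEquivRealProd_symm_apply,
        Complex.cos_ofReal_re, Complex.sin_ofReal_re]
  rw [← h1, ← lintegral_comp_polarCoord_symm']
  exact lintegral_congr fun p => by rw [hfun]

theorem convex_isodiam (K : Set ℂ) (hconv : Convex ℝ K) (hclosed : IsClosed K)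
    (h0 : (0 : ℂ) ∈ K) (him : ∀ z ∈ K, 0 ≤ z.im)
    (hd : ∀ x ∈ K, ∀ y ∈ K, dist x y ≤ 2) :
    volume K ≤ ENNReal.ofReal π := by
  classical
  have hKm : MeasurableSet K := hclosed.measurableSet
  set e : ℝ → ℂ := fun θ => ⟨Real.cos θ, Real.sin θ⟩ with he_def
  have he_re : ∀ θ, (e θ).re = Real.cos θ := fun θ => rfl
  have he_cont : Continuous e := by
    have he2 : e = fun θ => (Real.cos θ : ℂ) + (Real.sin θ : ℂ) * Complex.I :=
      funext fun θ => Complex.mk_eq_add_mul_I _ _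
    rw [he2]; fun_prop
  have he_im : ∀ θ, (e θ).im = Real.sin θ := fun θ => rfl
  have habs1 : ∀ θ, ‖e θ‖ = 1 := by
    intro θ
    rw [Complex.norm_def, he_def]
    simp only [Complex.normSq_mk]
    have h1 : Real.cos θ * Real.cos θ + Real.sin θ * Real.sin θ = 1 := by
      nlinarith [Real.sin_sq_add_cos_sq θ]
    rw [h1, Real.sqrt_one]
  have habs : ∀ r θ : ℝ, ‖(r : ℂ) * e θ‖ = |r| := by
    intro r θ
    rw [norm_mul, Complex.norm_real, Real.norm_eq_abs, habs1, mul_one]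
  have hmul_re : ∀ r θ : ℝ, ((r : ℂ) * e θ).re = r * Real.cos θ := by
    intro r θ
    simp [Complex.mul_re, he_re, he_im]
  have hmul_im : ∀ r θ : ℝ, ((r : ℂ) * e θ).im = r * Real.sin θ := by
    intro r θ
    simp [Complex.mul_im, he_re, he_im]
  set R : ℝ → Set ℝ := fun θ => {r : ℝ | 0 ≤ r ∧ (r : ℂ) * e θ ∈ K} with hR_def
  have hR0 : ∀ θ, (0 : ℝ) ∈ R θ := by
    intro θ; exact ⟨le_refl 0, by simpa using h0⟩
  have hRle2 : ∀ θ, ∀ r ∈ R θ, r ≤ 2 := by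
    intro θ r hr
    have h2 := hd _ hr.2 _ h0
    rwa [Complex.dist_eq, sub_zero, habs, abs_of_nonneg hr.1] at h2
  have hRbdd : ∀ θ, BddAbove (R θ) := fun θ => ⟨2, fun r hr => hRle2 θ r hr⟩
  have hRclosed : ∀ θ, IsClosed (R θ) := by
    intro θ
    have : R θ = Set.Ici (0 : ℝ) ∩ (fun r : ℝ => (r : ℂ) * e θ) ⁻¹' K := rfl
    rw [this]
    exact isClosed_Ici.inter
      (hclosed.preimage (Complex.continuous_ofReal.mul continuous_const))
  set ρ : ℝ → ℝ := fun θ => sSup (R θ) with hρ_def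
  have hρ_mem : ∀ θ, ρ θ ∈ R θ := fun θ => (hRclosed θ).csSup_mem ⟨0, hR0 θ⟩ (hRbdd θ)
  have hρ_nonneg : ∀ θ, 0 ≤ ρ θ := fun θ => (hρ_mem θ).1
  have hmem_iff : ∀ (θ : ℝ) (r : ℝ), 0 < r → ((r : ℂ) * e θ ∈ K ↔ r ≤ ρ θ) := by
    intro θ r hr
    constructor
    · intro h; exact le_csSup (hRbdd θ) ⟨hr.le, h⟩
    · intro h
      have hρpos : 0 < ρ θ := lt_of_lt_of_le hr h
      have ht : r / ρ θ ∈ Set.Icc (0 : ℝ) 1 :=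
        ⟨div_nonneg hr.le (hρ_nonneg θ), div_le_one_of_le₀ h (hρ_nonneg θ)⟩
      have hmem := hconv.smul_mem_of_zero_mem h0 (hρ_mem θ).2 ht
      have heq : (r / ρ θ) • ((ρ θ : ℂ) * e θ) = (r : ℂ) * e θ := by
        rw [Complex.real_smul, ← mul_assoc, ← Complex.ofReal_mul,
          div_mul_cancel₀ _ hρpos.ne']
      rwa [heq] at hmem
  have hOrth : ∀ θ : ℝ, ρ θ ^ 2 + ρ (θ + π / 2) ^ 2 ≤ 4 := by
    intro θ
    have h1 : ((ρ θ : ℝ) : ℂ) * e θ ∈ K := (hρ_mem θ).2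
    have h2 : ((ρ (θ + π / 2) : ℝ) : ℂ) * e (θ + π / 2) ∈ K := (hρ_mem _).2
    have hdist := hd _ h1 _ h2
    rw [Complex.dist_eq_re_im, hmul_re, hmul_im, hmul_re, hmul_im,
      Real.cos_add_pi_div_two, Real.sin_add_pi_div_two] at hdist
    set a := ρ θ
    set b := ρ (θ + π / 2)
    have hX : (0:ℝ) ≤ (a * Real.cos θ - b * -Real.sin θ) ^ 2
        + (a * Real.sin θ - b * Real.cos θ) ^ 2 := by positivity
    have h4 : (a * Real.cos θ - b * -Real.sin θ) ^ 2
        + (a * Real.sin θ - b * Real.cos θ) ^ 2 ≤ 4 := by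
      have hs := Real.sq_sqrt hX
      nlinarith [Real.sqrt_nonneg ((a * Real.cos θ - b * -Real.sin θ) ^ 2
        + (a * Real.sin θ - b * Real.cos θ) ^ 2)]
    have hcs := Real.sin_sq_add_cos_sq θ
    nlinarith
  have hneg : ∀ θ : ℝ, -π < θ → θ < 0 → ρ θ = 0 := by
    intro θ h1 h2
    have hle : ∀ r ∈ R θ, r ≤ 0 := by
      intro r hr
      by_contra hrpos
      push_neg at hrpos
      have himz := him _ hr.2
      rw [hmul_im] at himz
      have hs : Real.sin θ < 0 := Real.sin_neg_of_neg_of_neg_pi_lt h2 h1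
      nlinarith
    exact le_antisymm (csSup_le ⟨0, hR0 θ⟩ hle) (hρ_nonneg θ)
  have hρ_meas : Measurable ρ := by
    apply measurable_of_Ici
    intro c
    rcases le_or_gt c 0 with hc | hc
    · have huniv : ρ ⁻¹' Set.Ici c = Set.univ := by
        ext θ
        simpa [Set.mem_Ici] using le_trans hc (hρ_nonneg θ)
      rw [huniv]; exact MeasurableSet.univ
    · have hpre : ρ ⁻¹' Set.Ici c = (fun θ : ℝ => (c : ℂ) * e θ) ⁻¹' K := by
        ext θ
        simp only [Set.mem_preimage, Set.mem_Ici]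
        exact ⟨fun h => (hmem_iff θ c hc).2 h, fun h => (hmem_iff θ c hc).1 h⟩
      rw [hpre]
      exact (hclosed.preimage (continuous_const.mul he_cont)).measurableSet
  -- the volume computation
  set G : ℝ → ℝ≥0∞ := fun θ => ENNReal.ofReal (ρ θ ^ 2 / 2) with hG_def
  have hG_meas : Measurable G := by fun_prop
  have hsymm_eq : ∀ p : ℝ × ℝ, Complex.polarCoord.symm p = (p.1 : ℂ) * e p.2 := by
    intro p
    rw [Complex.polarCoord_symm_apply, ← Complex.mk_eq_add_mul_I]
  set F : ℝ × ℝ → ℝ≥0∞ :=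
    fun p => ENNReal.ofReal p.1 * K.indicator (1 : ℂ → ℝ≥0∞) (Complex.polarCoord.symm p)
    with hF_def
  have hF_meas : Measurable F := by
    apply Measurable.mul
    · exact ENNReal.measurable_ofReal.comp measurable_fst
    · have hφ : Continuous fun p : ℝ × ℝ => (Complex.polarCoord.symm p : ℂ) := by
        simp only [hsymm_eq]
        exact (Complex.continuous_ofReal.comp continuous_fst).mul (he_cont.comp continuous_snd)
      exact (measurable_const.indicator hKm).comp hφ.measurable
  have hvol : volume K = ∫⁻ p in polarCoord.target, F p := by
    rw [← lintegral_indicator_one hKm, ← lintegral_comp_complex_polarCoord_symm]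
  rw [hvol, polarCoord_target]
  have step1 : ∫⁻ p in Set.Ioi (0 : ℝ) ×ˢ Set.Ioo (-π) π, F p
      = ∫⁻ θ in Set.Ioo (-π) π, ∫⁻ r in Set.Ioi (0 : ℝ), F (r, θ) := by
    rw [MeasureTheory.Measure.volume_eq_prod, ← Measure.prod_restrict, lintegral_prod_symm F hF_meas.aemeasurable]
  have inner_eq : ∀ θ : ℝ, ∫⁻ r in Set.Ioi (0 : ℝ), F (r, θ) = G θ := by
    intro θ
    have e1 : ∀ r ∈ Set.Ioi (0 : ℝ),
        F (r, θ) = (Set.Ioc 0 (ρ θ)).indicator (fun r => ENNReal.ofReal r) r := by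
      intro r hr
      have hr' : (0 : ℝ) < r := hr
      simp only [hF_def, hsymm_eq]
      by_cases hK : (r : ℂ) * e θ ∈ K
      · have hmem : r ∈ Set.Ioc 0 (ρ θ) := ⟨hr', (hmem_iff θ r hr').1 hK⟩
        rw [Set.indicator_of_mem hK, Set.indicator_of_mem hmem]
        simp
      · have hmem : r ∉ Set.Ioc 0 (ρ θ) := fun hmem => hK ((hmem_iff θ r hr').2 hmem.2)
        rw [Set.indicator_of_notMem hK, Set.indicator_of_notMem hmem, mul_zero]
    rw [setLIntegral_congr_fun measurableSet_Ioi e1,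
      lintegral_indicator measurableSet_Ioc, Measure.restrict_restrict measurableSet_Ioc]
    have hint : Set.Ioc (0 : ℝ) (ρ θ) ∩ Set.Ioi 0 = Set.Ioc 0 (ρ θ) :=
      Set.inter_eq_left.2 Set.Ioc_subset_Ioi_self
    rw [hint, ← ofReal_integral_eq_lintegral_ofReal]
    · rw [hG_def]
      congr 1
      rw [← intervalIntegral.integral_of_le (hρ_nonneg θ), integral_id]
      norm_num
    · exact continuous_id.integrableOn_Ioc
    · filter_upwards [ae_restrict_mem measurableSet_Ioc] with r hr using hr.1.le
  rw [step1, setLIntegral_congr_fun measurableSet_Ioo (fun θ _ => inner_eq θ)]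
  -- split the domain
  have hsplit : Set.Ioo (-π) π = Set.Ioo (-π) 0 ∪ Set.Ico 0 π := by
    rw [Set.Ioo_union_Ico_eq_Ioo (by linarith [Real.pi_pos]) Real.pi_pos.le]
  have hdisj : Disjoint (Set.Ioo (-π) (0:ℝ)) (Set.Ico (0:ℝ) π) := by
    apply Set.disjoint_left.2
    rintro θ ⟨_, h2⟩ ⟨h3, _⟩
    linarith
  rw [hsplit, lintegral_union measurableSet_Ico hdisj]
  have hzero : ∫⁻ θ in Set.Ioo (-π) (0:ℝ), G θ = 0 := by
    rw [setLIntegral_congr_fun measurableSet_Ioo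
      (fun θ hθ => show G θ = 0 by
        simp only [hG_def]
        rw [hneg θ hθ.1 hθ.2]
        norm_num)]
    simp
  rw [hzero, zero_add]
  have hsplit2 : Set.Ico (0:ℝ) π = Set.Ico 0 (π/2) ∪ Set.Ico (π/2) π := by
    rw [Set.Ico_union_Ico_eq_Ico (by linarith [Real.pi_pos]) (by linarith [Real.pi_pos])]
  have hdisj2 : Disjoint (Set.Ico (0:ℝ) (π/2)) (Set.Ico (π/2) π) := by
    apply Set.disjoint_left.2
    rintro θ ⟨_, h2⟩ ⟨h3, _⟩
    linarith
  rw [hsplit2, lintegral_union measurableSet_Ico hdisj2]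
  have hshift : ∫⁻ θ in Set.Ico (π/2) π, G θ = ∫⁻ θ in Set.Ico (0:ℝ) (π/2), G (θ + π/2) := by
    have mp : MeasurePreserving (fun x : ℝ => x + π/2) volume volume :=
      measurePreserving_add_right volume (π/2)
    have emb : MeasurableEmbedding (fun x : ℝ => x + π/2) :=
      (Homeomorph.addRight (π/2)).measurableEmbedding
    have hpre : (fun x : ℝ => x + π/2) ⁻¹' Set.Ico (π/2) π = Set.Ico 0 (π/2) := by
      ext x
      simp only [Set.mem_preimage, Set.mem_Ico]
      constructor <;> intro h <;> exact ⟨by linarith [h.1], by linarith [h.2]⟩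
    rw [← mp.setLIntegral_comp_preimage_emb emb, hpre]
  rw [hshift, ← lintegral_add_left (by fun_prop)]
  have hbound : ∫⁻ θ in Set.Ico (0:ℝ) (π/2), (G θ + G (θ + π/2))
      ≤ ENNReal.ofReal 2 * volume (Set.Ico (0:ℝ) (π/2)) := by
    rw [← setLIntegral_const]
    apply lintegral_mono_ae
    filter_upwards [ae_restrict_mem measurableSet_Ico] with θ _
    simp only [hG_def]
    rw [← ENNReal.ofReal_add (by positivity) (by positivity)]
    exact ENNReal.ofReal_le_ofReal (by nlinarith [hOrth θ])
  refine le_trans hbound ?_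
  rw [Real.volume_Ico, ← ENNReal.ofReal_mul (by norm_num)]
  apply ENNReal.ofReal_le_ofReal
  rw [sub_zero]
  ring_nf
  exact le_refl _

theorem complex_isodiam (A : Set ℂ) (h : ∀ x ∈ A, ∀ y ∈ A, dist x y ≤ 2) :
    ∃ K : Set ℂ, IsClosed K ∧ A ⊆ K ∧ volume K ≤ ENNReal.ofReal π := by
  rcases A.eq_empty_or_nonempty with rfl | ⟨a, ha⟩
  · exact ⟨∅, isClosed_empty, Set.Subset.rfl, by simp [Real.pi_pos.le]⟩
  have hbnd : Bornology.IsBounded A := by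
    apply (Metric.isBounded_closedBall (x := a) (r := 2)).subset
    intro x hx
    exact Metric.mem_closedBall.2 (h x hx a ha)
  have hdiamA : Metric.diam A ≤ 2 := Metric.diam_le_of_forall_dist_le (by norm_num) h
  set S : Set ℂ := closure (convexHull ℝ A) with hS_def
  have hSclosed : IsClosed S := isClosed_closure
  have hSconv : Convex ℝ S := (convex_convexHull ℝ A).closure
  have hSsub : A ⊆ S := (subset_convexHull ℝ A).trans subset_closure
  have hSbnd : Bornology.IsBounded S := (isBounded_convexHull.2 hbnd).closure
  have hSdiam : Metric.diam S ≤ 2 := by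
    rw [hS_def, Metric.diam_closure, convexHull_diam]
    exact hdiamA
  have hSd : ∀ x ∈ S, ∀ y ∈ S, dist x y ≤ 2 := fun x hx y hy =>
    le_trans (Metric.dist_le_diam_of_mem hSbnd hx hy) hSdiam
  have hScpt : IsCompact S := Metric.isCompact_of_isClosed_isBounded hSclosed hSbnd
  have hSne : S.Nonempty := ⟨a, hSsub ha⟩
  obtain ⟨O, hO_mem, hO_min⟩ := hScpt.exists_isMinOn hSne Complex.continuous_im.continuousOn
  set K : Set ℂ := (fun z => z + O) ⁻¹' S with hK_def
  have hKclosed : IsClosed K := hSclosed.preimage (continuous_add_right O)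
  have hKconv : Convex ℝ K := by
    intro x hx y hy s t hs ht hst
    have h2 : s • (x + O) + t • (y + O) = s • x + t • y + (s + t) • O := by module
    show s • x + t • y + O ∈ S
    have h3 : s • x + t • y + O = s • (x + O) + t • (y + O) := by
      rw [h2, hst, one_smul]
    rw [h3]
    exact hSconv hx hy hs ht hst
  have hK0 : (0 : ℂ) ∈ K := by
    show (0 : ℂ) + O ∈ S
    rwa [zero_add]
  have hKim : ∀ z ∈ K, 0 ≤ z.im := by
    intro z hz
    have := hO_min hz
    simp only [Complex.add_im] at this
    have h2 : O.im ≤ z.im + O.im := this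
    linarith
  have hKd : ∀ x ∈ K, ∀ y ∈ K, dist x y ≤ 2 := by
    intro x hx y hy
    have := hSd _ hx _ hy
    rwa [dist_add_right] at this
  have hKvol : volume K = volume S := by
    rw [hK_def]
    exact measure_preimage_add_right volume O S
  refine ⟨S, hSclosed, hSsub, ?_⟩
  rw [← hKvol]
  exact convex_isodiam K hKconv hKclosed hK0 hKim hKd

noncomputable def planeToC : EuclideanSpace ℝ (Fin 2) ≃ᵐ ℂ :=
  ((MeasurableEquiv.toLp 2 (Fin 2 → ℝ)).symm.trans (MeasurableEquiv.finTwoArrow)).trans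
    Complex.measurableEquivRealProd.symm

theorem planeToC_measurePreserving : MeasurePreserving planeToC volume volume := by
  have h1 := EuclideanSpace.volume_preserving_symm_measurableEquiv_toLp (Fin 2)
  have h2 := volume_preserving_finTwoArrow ℝ
  have h3 := Complex.volume_preserving_equiv_real_prod.symm
  exact h3.comp (h2.comp h1)

theorem planeToC_apply (x : EuclideanSpace ℝ (Fin 2)) :
    planeToC x = Complex.mk (x 0) (x 1) := rfl

theorem planeToC_dist (x y : EuclideanSpace ℝ (Fin 2)) :
    dist (planeToC x) (planeToC y) = dist x y := by
  rw [planeToC_apply, planeToC_apply, Complex.dist_eq_re_im, EuclideanSpace.dist_eq]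
  simp only [Fin.sum_univ_two, Real.dist_eq]
  rw [sq_abs, sq_abs]

theorem plane_isodiam (A : Set (EuclideanSpace ℝ (Fin 2)))
    (h : ∀ x ∈ A, ∀ y ∈ A, dist x y ≤ 2) :
    volume A ≤ ENNReal.ofReal π := by
  obtain ⟨K, hKc, hKsub, hKvol⟩ := complex_isodiam (planeToC '' A) (by
    rintro x ⟨a, ha, rfl⟩ y ⟨b, hb, rfl⟩
    rw [planeToC_dist]
    exact h a ha b hb)
  have hsub : A ⊆ planeToC ⁻¹' K := fun x hx => hKsub ⟨x, hx, rfl⟩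
  calc volume A ≤ volume (planeToC ⁻¹' K) := measure_mono hsub
    _ = volume K := planeToC_measurePreserving.measure_preimage
        hKc.measurableSet.nullMeasurableSet
    _ ≤ ENNReal.ofReal π := hKvol

theorem T32_large_diam_measure_bound (S : Set (EuclideanSpace ℝ (Fin 2)))
    (hm : MeasurableSet S) (hT : IsT32Set S) (hdiam : 4 ≤ Metric.diam S) :
    volume S ≤ ENNReal.ofReal (2 * π) := by
  have key : ∀ ε : ℝ, 0 < ε → ε ≤ 1 →
      volume S ≤ ENNReal.ofReal (2 * π) + ENNReal.ofReal (2 * π * ε) := by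
    intro ε hε hε1
    obtain ⟨p, hp, q, hq, hpq⟩ : ∃ p ∈ S, ∃ q ∈ S, 4 - ε < dist p q := by
      by_contra hcon
      push_neg at hcon
      have : Metric.diam S ≤ 4 - ε := Metric.diam_le_of_forall_dist_le (by linarith) hcon
      linarith
    set m := midpoint ℝ p q with hm_def
    set S₁ := {x ∈ S | 2 < dist x q} with hS₁_def
    set S₂ := {x ∈ S | 2 < dist x p} with hS₂_def
    have hcover : S ⊆ S₁ ∪ S₂ ∪ closedBall m (Real.sqrt (2 * ε)) := by
      intro x hx
      by_cases h1 : 2 < dist x q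
      · exact Or.inl (Or.inl ⟨hx, h1⟩)
      by_cases h2 : 2 < dist x p
      · exact Or.inl (Or.inr ⟨hx, h2⟩)
      push_neg at h1 h2
      right
      have hap :=
        EuclideanGeometry.dist_sq_add_dist_sq_eq_two_mul_dist_midpoint_sq_add_half_dist_sq x p q
      have hd2 : (4 - ε) ^ 2 ≤ dist p q ^ 2 := by
        nlinarith [(dist_nonneg : (0:ℝ) ≤ dist p q)]
      have hxm : dist x m ^ 2 ≤ 2 * ε := by nlinarith [(dist_nonneg : (0:ℝ) ≤ dist x p), (dist_nonneg : (0:ℝ) ≤ dist x q)]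
      have hle : dist x m ≤ Real.sqrt (2 * ε) := by
        rw [← Real.sqrt_sq (dist_nonneg : (0:ℝ) ≤ dist x m)]
        exact Real.sqrt_le_sqrt hxm
      exact Metric.mem_closedBall.2 hle
    have hS₁vol : volume S₁ ≤ ENNReal.ofReal π := by
      apply plane_isodiam
      intro x hx y hy
      rcases hT x hx.1 q hq y hy.1 with h | h | h
      · linarith [hx.2]
      · rw [dist_comm] at h; linarith [hy.2]
      · exact h
    have hS₂vol : volume S₂ ≤ ENNReal.ofReal π := by
      apply plane_isodiam
      intro x hx y hy
      rcases hT x hx.1 p hp y hy.1 with h | h | h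
      · linarith [hx.2]
      · rw [dist_comm] at h; linarith [hy.2]
      · exact h
    have hballvol : volume (closedBall m (Real.sqrt (2 * ε))) ≤ ENNReal.ofReal (2 * π * ε) := by
      rw [InnerProductSpace.volume_closedBall, finrank_euclideanSpace_fin]
      have h1 : ((2 : ℕ) : ℝ) / 2 + 1 = 2 := by norm_num
      rw [h1, Real.Gamma_two]
      have h2 : Real.sqrt π ^ 2 / 1 = π := by
        rw [Real.sq_sqrt Real.pi_pos.le, div_one]
      rw [h2]
      have h3 : (ENNReal.ofReal (Real.sqrt (2 * ε))) ^ 2 = ENNReal.ofReal (2 * ε) := by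
        rw [← ENNReal.ofReal_pow (Real.sqrt_nonneg _), Real.sq_sqrt (by positivity)]
      rw [h3, ← ENNReal.ofReal_mul (by positivity)]
      apply ENNReal.ofReal_le_ofReal
      nlinarith [Real.pi_pos]
    calc volume S ≤ volume (S₁ ∪ S₂ ∪ closedBall m (Real.sqrt (2 * ε))) := measure_mono hcover
      _ ≤ volume (S₁ ∪ S₂) + volume (closedBall m (Real.sqrt (2 * ε))) := measure_union_le _ _
      _ ≤ (volume S₁ + volume S₂) + volume (closedBall m (Real.sqrt (2 * ε))) := by
          exact add_le_add_left (measure_union_le _ _) _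
      _ ≤ (ENNReal.ofReal π + ENNReal.ofReal π) + ENNReal.ofReal (2 * π * ε) := by
          exact add_le_add (add_le_add hS₁vol hS₂vol) hballvol
      _ = ENNReal.ofReal (2 * π) + ENNReal.ofReal (2 * π * ε) := by
          rw [← ENNReal.ofReal_add Real.pi_pos.le Real.pi_pos.le]
          norm_num [two_mul]
  apply ENNReal.le_of_forall_pos_le_add
  intro δ hδ _
  set εr : ℝ := min 1 ((δ : ℝ) / (2 * π + 1)) with hεr_def
  have hεrpos : 0 < εr := by
    apply lt_min one_pos
    apply div_pos (by exact_mod_cast hδ)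
    nlinarith [Real.pi_pos]
  have hεr1 : εr ≤ 1 := min_le_left _ _
  refine le_trans (key εr hεrpos hεr1) ?_
  apply add_le_add_right
  have h2 : 2 * π * εr ≤ (δ : ℝ) := by
    have h3 : εr ≤ (δ : ℝ) / (2 * π + 1) := min_le_right _ _
    have h4 : (0:ℝ) < 2 * π + 1 := by nlinarith [Real.pi_pos]
    rw [le_div_iff₀ h4] at h3
    nlinarith [Real.pi_pos, hεrpos]
  calc ENNReal.ofReal (2 * π * εr) ≤ ENNReal.ofReal (δ : ℝ) := ENNReal.ofReal_le_ofReal h2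
    _ = (δ : ℝ≥0∞) := ENNReal.ofReal_coe_nnreal
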